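/- For each p in the alphabet A_d, the operator L_p on ℤ^{A_d} defined by L_p(e_q) = e_q for q ≠ p and L_p(e_p) = -Σ_{r<p} e_r + Σ_{r≥p} e_r satisfies L_p Ω (L_p)^T = Ω, where Ω_{pq} = sign(q-p). -/

import Mathlib

open Matrix

/-- The antisymmetric matrix `Ω` with `Ω p q = sign (q - p)`. -/
def Omega (d : ℕ) : Matrix (Fin d) (Fin d) ℤ :=
  Matrix.of fun p q => if p < q then 1 else if q < p then -1 else 0

/-- The matrix of the operator `L_p` (columns are the images of the basis vectors):
`L_p e_q = e_q` for `q ≠ p` and `L_p e_p = -Σ_{r<p} e_r + Σ_{r≥p} e_r`. -/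
def L (d : ℕ) (p : Fin d) : Matrix (Fin d) (Fin d) ℤ :=
  Matrix.of fun r q => if q = p then (if r < p then -1 else 1) else (if r = q then 1 else 0)

lemma Omega_transpose (d : ℕ) : (Omega d)ᵀ = -(Omega d) := by
  ext a b
  simp only [transpose_apply, Omega, of_apply, Matrix.neg_apply]
  rcases lt_trichotomy a b with h | h | h
  · simp [h, h.not_gt]
  · simp [h]
  · simp [h, h.not_gt]

lemma L_eq (d : ℕ) (p : Fin d) :
    L d p = 1 - Omega d * single p p 1 := by
  ext a q
  simp only [L, of_apply, Matrix.sub_apply, one_apply, mul_apply, single]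
  by_cases hq : q = p
  · subst hq
    rw [Finset.sum_eq_single q]
    · rcases lt_trichotomy a q with h | h | h
      · simp [Omega, h, h.ne, h.not_gt]
      · simp [Omega, h]
      · simp [Omega, h, h.ne', h.not_gt]
    · intro r _ hr
      simp [hr.symm]
    · simp
  · rw [Finset.sum_eq_zero]
    · simp [hq, eq_comm]
    · intro r _
      simp [Ne.symm hq]

lemma E_transpose (d : ℕ) (p : Fin d) :
    (single p p (1:ℤ))ᵀ = single p p 1 := by
  ext a b
  simp [single, and_comm]

lemma EOmegaE (d : ℕ) (p : Fin d) :
    single p p (1:ℤ) * Omega d * single p p 1 = 0 := by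
  ext a b
  rcases eq_or_ne b p with hb | hb
  · rw [hb, Matrix.mul_single_apply_same]
    rcases eq_or_ne a p with ha | ha
    · rw [ha, Matrix.single_mul_apply_same]
      simp [Omega]
    · rw [Matrix.single_mul_apply_of_ne _ _ _ _ _ ha]
      simp
  · rw [Matrix.mul_single_apply_of_ne _ _ _ _ _ hb]
    simp

/-- Each operator `L_p` satisfies `L_p Ω (L_p)ᵀ = Ω`. -/
theorem L_preserves_omega (d : ℕ) (hd : 2 ≤ d) (p : Fin d) :
    L d p * Omega d * (L d p)ᵀ = Omega d := by
  set A := Omega d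
  set E := single p p (1:ℤ)
  have hL : L d p = 1 - A * E := L_eq d p
  have hT : (1 - A * E)ᵀ = 1 + E * A := by
    rw [transpose_sub, transpose_one, transpose_mul, Omega_transpose,
      E_transpose d p]
    noncomm_ring
  rw [hL, hT]
  have key : (1 - A * E) * A * (1 + E * A) = A - A * (E * A * E) * A := by
    noncomm_ring
  rw [key, EOmegaE]
  simp
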